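/- For every real r ≠ 0, there exists δ > 0 such that for all T with 0 < T < δ, the variances of the two coordinates under the uniform distribution on the arc satisfy Var₁(T) < Var₂(T); that is, near T = 0 the variance along the tangential direction strictly dominates the variance along the normal direction. -/

import Mathlib

open MeasureTheory intervalIntegral

/-- Mean of the first coordinate under the uniform distribution on the arc. -/
noncomputable def mu1 (r T : ℝ) : ℝ := (1 / (2 * T)) * ∫ t in (-T)..T, r * Real.cos t

/-- Variance of the first coordinate under the uniform distribution on the arc. -/
noncomputable def Var1 (r T : ℝ) : ℝ :=
  (1 / (2 * T)) * ∫ t in (-T)..T, (r * Real.cos t - mu1 r T) ^ 2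

/-- Variance of the second coordinate under the uniform distribution on the arc. -/
noncomputable def Var2 (r T : ℝ) : ℝ :=
  (1 / (2 * T)) * ∫ t in (-T)..T, (r * Real.sin t) ^ 2

lemma mu1_eq (r T : ℝ) : mu1 r T = (1 / (2 * T)) * (r * (2 * Real.sin T)) := by
  unfold mu1
  rw [intervalIntegral.integral_const_mul, integral_cos, Real.sin_neg]
  ring

lemma var1_int (r T : ℝ) :
    ∫ t in (-T)..T, (r * Real.cos t - mu1 r T) ^ 2
      = r^2 * ((Real.cos T * Real.sin T - Real.cos (-T) * Real.sin (-T) + T - (-T)) / 2)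
        - (2 * mu1 r T * r) * (Real.sin T - Real.sin (-T)) + (mu1 r T)^2 * (T - (-T)) := by
  set m := mu1 r T
  have e1 : (fun t => (r * Real.cos t - m)^2)
      = fun t => (r^2 * Real.cos t^2 - (2*m*r) * Real.cos t) + m^2 := by
    funext t; ring
  have i1 : IntervalIntegrable (fun t => r^2 * Real.cos t^2) volume (-T) T :=
    (by continuity : Continuous fun t => r^2 * Real.cos t^2).intervalIntegrable _ _
  have i2 : IntervalIntegrable (fun t => (2*m*r) * Real.cos t) volume (-T) T :=
    (by continuity : Continuous fun t => (2*m*r) * Real.cos t).intervalIntegrable _ _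
  have i3 : IntervalIntegrable (fun _ : ℝ => m^2) volume (-T) T :=
    intervalIntegrable_const
  calc ∫ t in (-T)..T, (r * Real.cos t - m) ^ 2
      = ∫ t in (-T)..T, ((r^2 * Real.cos t^2 - (2*m*r) * Real.cos t) + m^2) := by rw [← e1]
    _ = (∫ t in (-T)..T, (r^2 * Real.cos t^2 - (2*m*r) * Real.cos t))
        + ∫ t in (-T)..T, (m^2 : ℝ) := intervalIntegral.integral_add (i1.sub i2) i3
    _ = ((∫ t in (-T)..T, r^2 * Real.cos t^2) - ∫ t in (-T)..T, (2*m*r) * Real.cos t)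
        + ∫ t in (-T)..T, (m^2 : ℝ) := by rw [intervalIntegral.integral_sub i1 i2]
    _ = _ := by
        rw [intervalIntegral.integral_const_mul, intervalIntegral.integral_const_mul,
          integral_cos_sq, integral_cos, intervalIntegral.integral_const, smul_eq_mul]
        ring

lemma var2_int (r T : ℝ) :
    ∫ t in (-T)..T, (r * Real.sin t) ^ 2
      = r^2 * ((Real.sin (-T) * Real.cos (-T) - Real.sin T * Real.cos T + T - (-T)) / 2) := by
  have e1 : (fun t => (r * Real.sin t)^2) = fun t => r^2 * Real.sin t^2 := by
    funext t; ring
  rw [e1, intervalIntegral.integral_const_mul, integral_sin_sq]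

/-- for every real `r ≠ 0`, there exists `δ > 0` such that for all `T`
with `0 < T < δ`, the variances satisfy `Var₁(T) < Var₂(T)`. -/
theorem variance_tangential_dominates (r : ℝ) (hr : r ≠ 0) :
    ∃ δ : ℝ, 0 < δ ∧ ∀ T : ℝ, 0 < T → T < δ → Var1 r T < Var2 r T := by
  refine ⟨1, one_pos, fun T hT hT1 => ?_⟩
  have hT2 : T < Real.pi / 2 := lt_of_lt_of_le hT1 (by linarith [Real.pi_gt_three])
  have hs : 0 < Real.sin T := Real.sin_pos_of_pos_of_lt_pi hT (by linarith [Real.pi_gt_three])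
  have hc : 0 < Real.cos T := Real.cos_pos_of_mem_Ioo ⟨by linarith, hT2⟩
  have htan : T < Real.tan T := Real.lt_tan hT hT2
  have hkey : T * Real.cos T < Real.sin T := by
    have := (mul_lt_mul_of_pos_right htan hc)
    rwa [Real.tan_eq_sin_div_cos, div_mul_cancel₀ _ (ne_of_gt hc)] at this
  have hr2 : 0 < r ^ 2 := by positivity
  have hm : mu1 r T = r * Real.sin T / T := by
    rw [mu1_eq]; field_simp
  have hV1 : Var1 r T = r^2/2 + r^2 * Real.sin T * Real.cos T / (2*T)
      - r^2 * Real.sin T ^ 2 / T^2 := by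
    unfold Var1
    rw [var1_int, hm]
    simp only [Real.sin_neg, Real.cos_neg]
    field_simp
    ring
  have hV2 : Var2 r T = r^2/2 - r^2 * Real.sin T * Real.cos T / (2*T) := by
    unfold Var2
    rw [var2_int]
    simp only [Real.sin_neg, Real.cos_neg]
    field_simp
    ring
  rw [hV1, hV2, ← sub_pos]
  have heq : (r^2/2 - r^2 * Real.sin T * Real.cos T / (2*T))
      - (r^2/2 + r^2 * Real.sin T * Real.cos T / (2*T) - r^2 * Real.sin T ^ 2 / T^2)
      = (r^2 * Real.sin T / T^2) * (Real.sin T - T * Real.cos T) := by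
    field_simp; ring
  rw [heq]
  exact mul_pos (by positivity) (by linarith)
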